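/- Let x² be the Cantor tent function built from a nonincreasing positive sequence (bₙ) with bₙ → 0, and for t ∈ [0,1] let k_n(t) be the number of level-n removed intervals I_{n,k} entirely contained in [0,t]. Then for every c > 0 and t ∈ [0,1], Σ_{n≥0} 2·k_n(t)·max(bₙ − c, 0) ≤ TV^c(x²,[0,t]) ≤ Σ_{n≥0} 2·(k_n(t) + 1)·max(bₙ − c, 0). -/

import Mathlib

open scoped ENNReal
open Filter

/-- Truncated variation of `x` with parameter `c` on `[s,t]`. -/
noncomputable def truncVar (x : ℝ → ℝ) (c s t : ℝ) : ℝ≥0∞ :=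
  ⨆ (n : ℕ) (u : Fin (n + 1) → ℝ) (_ : Monotone u) (_ : u 0 = s)
    (_ : u (Fin.last n) = t),
    ∑ i : Fin n, ENNReal.ofReal (|x (u i.succ) - x (u i.castSucc)| - c)

/-- Left endpoint of the `k`-th (in increasing order, `k < 2ⁿ`) removed open
middle-third interval of level `n` in the Cantor construction. -/
noncomputable def cantorLeft (n k : ℕ) : ℝ :=
  (∑ i ∈ Finset.range n,
    (if Nat.testBit k (n - 1 - i) then (2 : ℝ) else 0) * (3 : ℝ) ^ (-((i : ℤ) + 1)))
    + (3 : ℝ) ^ (-((n : ℤ) + 1))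

/-- The `k`-th removed open interval `I_{n,k}` of level `n`, of length `3^{−(n+1)}`. -/
noncomputable def removedInterval (n k : ℕ) : Set ℝ :=
  Set.Ioo (cantorLeft n k) (cantorLeft n k + (3 : ℝ) ^ (-((n : ℤ) + 1)))

/-- The Cantor set: `[0,1]` minus all removed middle-third intervals. -/
noncomputable def cantorThirdsSet : Set ℝ :=
  Set.Icc 0 1 \ ⋃ (n : ℕ), ⋃ (k : ℕ) (_ : k < 2 ^ n), removedInterval n k

/-- `k_n(t)`: the number of level-`n` removed intervals entirely contained in `[0,t]`. -/
noncomputable def levelCount (n : ℕ) (t : ℝ) : ℕ :=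
  ((Finset.range (2 ^ n)).filter
    (fun k => cantorLeft n k + (3 : ℝ) ^ (-((n : ℤ) + 1)) ≤ t)).card

namespace CantorTentAux

noncomputable def β (n : ℕ) : ℝ := (3 : ℝ) ^ (-((n : ℤ) + 1))

lemma beta_pos (n : ℕ) : 0 < β n := zpow_pos (by norm_num) _

lemma beta_succ (n : ℕ) : 3 * β (n + 1) = β n := by
  unfold β
  rw [show (-((n:ℤ) + 1)) = -(((n+1:ℕ):ℤ) + 1) + 1 by push_cast; ring,
      zpow_add_one₀ (by norm_num : (3:ℝ) ≠ 0)]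
  ring

noncomputable def pL (n k : ℕ) : ℝ :=
  ∑ i ∈ Finset.range n, (if Nat.testBit k (n - 1 - i) then (2 : ℝ) else 0) * (3 : ℝ) ^ (-((i : ℤ) + 1))

lemma cantorLeft_eq (n k : ℕ) : cantorLeft n k = pL n k + β n := rfl

lemma pL_nonneg (n k : ℕ) : 0 ≤ pL n k := by
  apply Finset.sum_nonneg
  intro i _
  have := beta_pos i
  unfold β at this
  positivity

lemma pL_succ (n k : ℕ) : pL (n+1) k = pL n (k/2) + (if Nat.testBit k 0 then 2 * β n else 0) := by
  unfold pL
  rw [Finset.sum_range_succ]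
  congr 1
  · apply Finset.sum_congr rfl
    intro i hi
    have hi' : i < n := Finset.mem_range.mp hi
    have hb : Nat.testBit k (n + 1 - 1 - i) = Nat.testBit (k/2) (n - 1 - i) := by
      rw [Nat.testBit_div_two]
      congr 1
      omega
    rw [hb]
  · have : n + 1 - 1 - n = 0 := by omega
    rw [this]
    unfold β
    split <;> ring

lemma pL_le_one (n : ℕ) : ∀ k, k < 2^n → pL n k + 3 * β n ≤ 1 := by
  induction n with
  | zero =>
    intro k hk
    unfold pL β
    norm_num
  | succ n ih =>
    intro k hk
    have hq : k / 2 < 2 ^ n := by omega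
    have h1 := ih (k/2) hq
    have h2 : pL (n+1) k ≤ pL n (k/2) + 2 * β n := by
      rw [pL_succ]
      have := beta_pos n
      split <;> nlinarith
    have h3 := beta_succ n
    nlinarith [beta_pos n, beta_pos (n+1)]

lemma pL_sep (n : ℕ) : ∀ k k', k < 2^n → k' < 2^n → k < k' → pL n k + 3 * β n ≤ pL n k' := by
  induction n with
  | zero => intro k k' hk hk' hlt; omega
  | succ n ih =>
    intro k k' hk hk' hlt
    have hq' : k' / 2 < 2 ^ n := by omega
    have hq : k / 2 < 2 ^ n := by omega
    have hble : k / 2 ≤ k' / 2 := Nat.div_le_div_right (le_of_lt hlt)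
    rw [pL_succ, pL_succ]
    rcases lt_or_eq_of_le hble with hqq | hqq
    · have h1 := ih (k/2) (k'/2) hq hq' hqq
      have h2 := beta_succ n
      have := beta_pos n
      have hif : (if Nat.testBit k 0 then 2 * β n else 0) ≤ 2 * β n := by
        split <;> nlinarith
      have hif' : (0:ℝ) ≤ (if Nat.testBit k' 0 then 2 * β n else 0) := by
        split <;> nlinarith
      nlinarith
    · -- same parent: k' = k + 1, k even
      have hk2 : k' = k + 1 ∧ k % 2 = 0 := by omega
      have hb0 : Nat.testBit k 0 = false := by
        simp [Nat.testBit_zero]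
        omega
      have hb1 : Nat.testBit k' 0 = true := by
        simp [Nat.testBit_zero]
        omega
      rw [hqq, hb0, hb1]
      simp only [if_false, if_true, Bool.false_eq_true]
      have h2 := beta_succ n
      have := beta_pos n
      have := beta_pos (n+1)
      nlinarith

lemma gap_subset_open_piece (n k : ℕ) :
    Set.Icc (cantorLeft n k) (cantorLeft n k + β n) ⊆ Set.Ioo (pL n k) (pL n k + 3 * β n) := by
  rw [cantorLeft_eq]
  intro s hs
  obtain ⟨h1, h2⟩ := hs
  have := beta_pos n
  constructor <;> nlinarith

lemma open_piece_child (n k : ℕ) :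
    Set.Ioo (pL (n+1) k) (pL (n+1) k + 3 * β (n+1)) ⊆ Set.Ioo (pL n (k/2)) (pL n (k/2) + 3 * β n) := by
  have h2 := beta_succ n
  have hbp := beta_pos n
  have hbp' := beta_pos (n+1)
  intro s hs
  rw [pL_succ] at hs
  obtain ⟨h3, h4⟩ := hs
  by_cases hbit : Nat.testBit k 0 = true
  · rw [if_pos hbit] at h3 h4; constructor <;> nlinarith
  · rw [if_neg hbit] at h3 h4; constructor <;> nlinarith

lemma open_child_disj_gap (n k : ℕ) :
    Disjoint (Set.Ioo (pL (n+1) k) (pL (n+1) k + 3 * β (n+1)))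
      (Set.Icc (cantorLeft n (k/2)) (cantorLeft n (k/2) + β n)) := by
  rw [Set.disjoint_left]
  intro s hs hs'
  rw [cantorLeft_eq] at hs'
  rw [pL_succ] at hs
  obtain ⟨h1, h2⟩ := hs
  obtain ⟨h3, h4⟩ := hs'
  have hb := beta_succ n
  have hbp := beta_pos n
  have hbp' := beta_pos (n+1)
  by_cases hbit : Nat.testBit k 0 = true
  · rw [if_pos hbit] at h1 h2; nlinarith
  · rw [if_neg hbit] at h1 h2; nlinarith

lemma open_piece_disj_gap_same (n k k' : ℕ) (hk : k < 2^n) (hk' : k' < 2^n) (hne : k' ≠ k) :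
    Disjoint (Set.Ioo (pL n k') (pL n k' + 3 * β n))
      (Set.Icc (cantorLeft n k) (cantorLeft n k + β n)) := by
  rw [Set.disjoint_left]
  intro s hs hs'
  rw [cantorLeft_eq] at hs'
  obtain ⟨h1, h2⟩ := hs
  obtain ⟨h3, h4⟩ := hs'
  have := beta_pos n
  rcases Nat.lt_or_ge k k' with h | h
  · have := pL_sep n k k' hk hk' h
    nlinarith
  · have hlt : k' < k := by omega
    have := pL_sep n k' k hk' hk hlt
    nlinarith

lemma open_piece_disj_gap_deep (d : ℕ) : ∀ n k k', k < 2^n → k' < 2^(n+d+1) →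
    Disjoint (Set.Ioo (pL (n+d+1) k') (pL (n+d+1) k' + 3 * β (n+d+1)))
      (Set.Icc (cantorLeft n k) (cantorLeft n k + β n)) := by
  induction d with
  | zero =>
    intro n k k' hk hk'
    have hk'' : k' < 2^(n+1) := by simpa using hk'
    have hq : k'/2 < 2^n := by omega
    have hnn : n + 0 + 1 = n + 1 := by omega
    rw [hnn]
    rcases eq_or_ne (k'/2) k with h | h
    · have := open_child_disj_gap n k'
      rwa [h] at this
    · exact Disjoint.mono_left (open_piece_child n k')
        (open_piece_disj_gap_same n k (k'/2) hk hq h)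
  | succ d ih =>
    intro n k k' hk hk'
    have hk'' : k' < 2^((n+d+1)+1) := by
      rw [show (n+d+1)+1 = n+(d+1)+1 by omega]; exact hk'
    have hq : k'/2 < 2^(n+d+1) := by omega
    have h1 : Set.Ioo (pL (n+d+1+1) k') (pL (n+d+1+1) k' + 3 * β (n+d+1+1)) ⊆
        Set.Ioo (pL (n+d+1) (k'/2)) (pL (n+d+1) (k'/2) + 3 * β (n+d+1)) :=
      open_piece_child (n+d+1) k'
    have h2 := ih n k (k'/2) hk hq
    have heq : n + (d+1) + 1 = n + d + 1 + 1 := by omega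
    rw [heq]
    exact Disjoint.mono_left h1 h2

lemma closedGap_disjoint {n k n' k' : ℕ} (hk : k < 2^n) (hk' : k' < 2^n')
    (hne : (n, k) ≠ (n', k')) :
    Disjoint (Set.Icc (cantorLeft n k) (cantorLeft n k + β n))
      (Set.Icc (cantorLeft n' k' ) (cantorLeft n' k' + β n')) := by
  have key : ∀ m j m' j', j < 2^m → j' < 2^m' → m < m' →
      Disjoint (Set.Icc (cantorLeft m j) (cantorLeft m j + β m))
        (Set.Icc (cantorLeft m' j') (cantorLeft m' j' + β m')) := by
    intro m j m' j' hj hj' hmm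
    obtain ⟨d, rfl⟩ : ∃ d, m' = m + d + 1 := ⟨m' - m - 1, by omega⟩
    exact (Disjoint.mono_left (gap_subset_open_piece _ _)
      (open_piece_disj_gap_deep d m j j' hj hj')).symm
  rcases Nat.lt_trichotomy n n' with h | h | h
  · exact key n k n' k' hk hk' h
  · subst h
    have hkk : k' ≠ k := fun h => hne (by rw [h])
    exact (Disjoint.mono_left (gap_subset_open_piece n k')
      (open_piece_disj_gap_same n k k' hk hk' hkk)).symm
  · exact (key n' k' n k hk' hk h).symm

lemma closedGap_subset_unit {n k : ℕ} (hk : k < 2^n) :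
    Set.Icc (cantorLeft n k) (cantorLeft n k + β n) ⊆ Set.Icc 0 1 := by
  intro s hs
  obtain ⟨h1, h2⟩ := hs
  rw [cantorLeft_eq] at h1 h2
  have := pL_nonneg n k
  have := pL_le_one n k hk
  have := beta_pos n
  constructor <;> nlinarith

lemma endpoint_left_mem (n k : ℕ) (hk : k < 2^n) : cantorLeft n k ∈ cantorThirdsSet := by
  constructor
  · exact closedGap_subset_unit hk ⟨le_refl _, by nlinarith [beta_pos n]⟩
  · intro hmem
    simp only [Set.mem_iUnion] at hmem
    obtain ⟨n', k', hk', hs⟩ := hmem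
    rcases eq_or_ne (n, k) (n', k') with h | h
    · injection h with h1 h2
      subst h1; subst h2
      exact absurd hs.1 (lt_irrefl _)
    · have hd := closedGap_disjoint hk hk' h
      rw [Set.disjoint_left] at hd
      exact hd ⟨le_refl _, by nlinarith [beta_pos n]⟩ (Set.Ioo_subset_Icc_self hs)

lemma endpoint_right_mem (n k : ℕ) (hk : k < 2^n) :
    cantorLeft n k + β n ∈ cantorThirdsSet := by
  constructor
  · exact closedGap_subset_unit hk ⟨by nlinarith [beta_pos n], le_refl _⟩
  · intro hmem
    simp only [Set.mem_iUnion] at hmem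
    obtain ⟨n', k', hk', hs⟩ := hmem
    rcases eq_or_ne (n, k) (n', k') with h | h
    · injection h with h1 h2
      subst h1; subst h2
      exact absurd hs.2 (lt_irrefl _)
    · have hd := closedGap_disjoint hk hk' h
      rw [Set.disjoint_left] at hd
      exact hd ⟨by nlinarith [beta_pos n], le_refl _⟩ (Set.Ioo_subset_Icc_self hs)

lemma zero_mem_cantor : (0:ℝ) ∈ cantorThirdsSet := by
  constructor
  · exact ⟨le_refl _, zero_le_one⟩
  · intro hmem
    simp only [Set.mem_iUnion] at hmem
    obtain ⟨n, k, hk, hs⟩ := hmem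
    have h1 : (0:ℝ) < cantorLeft n k := by
      rw [cantorLeft_eq]
      nlinarith [pL_nonneg n k, beta_pos n]
    exact absurd hs.1 (by linarith)

lemma infDist_gap {n k : ℕ} {s : ℝ} (hk : k < 2^n) (hs : s ∈ removedInterval n k) :
    Metric.infDist s cantorThirdsSet
      = min (s - cantorLeft n k) (cantorLeft n k + β n - s) := by
  obtain ⟨h1, h2⟩ := hs
  change cantorLeft n k < s at h1
  have h2' : s < cantorLeft n k + β n := h2
  apply le_antisymm
  · apply le_min
    · have h := Metric.infDist_le_dist_of_mem (x := s) (endpoint_left_mem n k hk)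
      rwa [Real.dist_eq, abs_of_pos (by linarith)] at h
    · have h := Metric.infDist_le_dist_of_mem (x := s) (endpoint_right_mem n k hk)
      rwa [Real.dist_eq, abs_of_neg (by linarith), neg_sub] at h
  · by_contra hcon
    push_neg at hcon
    obtain ⟨y, hy, hdy⟩ := (Metric.infDist_lt_iff ⟨0, zero_mem_cantor⟩).mp hcon
    have hy' : y ∉ removedInterval n k := by
      intro hmem
      exact hy.2 (Set.mem_iUnion.mpr ⟨n, Set.mem_iUnion.mpr ⟨k, Set.mem_iUnion.mpr ⟨hk, hmem⟩⟩⟩)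
    rw [Real.dist_eq] at hdy
    rcases le_or_gt y (cantorLeft n k) with h | h
    · have h1' : min (s - cantorLeft n k) (cantorLeft n k + β n - s) ≤ s - y := by
        calc min (s - cantorLeft n k) (cantorLeft n k + β n - s) ≤ s - cantorLeft n k :=
          min_le_left _ _
        _ ≤ s - y := by linarith
      rw [abs_of_pos (by linarith)] at hdy
      linarith
    · have hry : cantorLeft n k + β n ≤ y := by
        by_contra hcon2
        push_neg at hcon2
        exact hy' ⟨h, hcon2⟩
      rw [abs_of_neg (by linarith)] at hdy
      have : min (s - cantorLeft n k) (cantorLeft n k + β n - s) ≤ cantorLeft n k + β n - s :=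
        min_le_right _ _
      linarith



lemma pow_mul_beta (n : ℕ) : (3:ℝ)^(n+1) * β n = 1 := by
  unfold β
  rw [← zpow_natCast (3:ℝ) (n+1), ← zpow_add₀ (by norm_num : (3:ℝ) ≠ 0)]
  rw [show ((n+1:ℕ):ℤ) + -((n:ℤ)+1) = 0 by push_cast; ring, zpow_zero]

section XVals

variable {b : ℕ → ℝ} {x : ℝ → ℝ}

lemma x_gap (hxI : ∀ n k : ℕ, k < 2 ^ n → ∀ s ∈ removedInterval n k,
      x s = 2 * 3 ^ (n + 1) * b n * Metric.infDist s cantorThirdsSet)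
    {n k : ℕ} {s : ℝ} (hk : k < 2^n) (hs : s ∈ removedInterval n k) :
    x s = 2 * 3^(n+1) * b n * min (s - cantorLeft n k) (cantorLeft n k + β n - s) := by
  rw [hxI n k hk s hs, infDist_gap hk hs]

lemma x_le_b (hxI : ∀ n k : ℕ, k < 2 ^ n → ∀ s ∈ removedInterval n k,
      x s = 2 * 3 ^ (n + 1) * b n * Metric.infDist s cantorThirdsSet)
    (hbpos : ∀ n, 0 < b n)
    {n k : ℕ} {s : ℝ} (hk : k < 2^n) (hs : s ∈ removedInterval n k) : x s ≤ b n := by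
  rw [x_gap hxI hk hs]
  have hmin : min (s - cantorLeft n k) (cantorLeft n k + β n - s) ≤ β n / 2 := by
    have := min_le_left (s - cantorLeft n k) (cantorLeft n k + β n - s)
    have := min_le_right (s - cantorLeft n k) (cantorLeft n k + β n - s)
    linarith
  have hp := pow_mul_beta n
  have hppos : (0:ℝ) < (3:ℝ)^(n+1) := by positivity
  have hbn := hbpos n
  have hcoef : (0:ℝ) ≤ 2 * 3^(n+1) * b n := by nlinarith
  have hstep := mul_le_mul_of_nonneg_left hmin hcoef
  nlinarith

lemma x_nonneg (hxC : ∀ s ∈ cantorThirdsSet, x s = 0)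
    (hxI : ∀ n k : ℕ, k < 2 ^ n → ∀ s ∈ removedInterval n k,
      x s = 2 * 3 ^ (n + 1) * b n * Metric.infDist s cantorThirdsSet)
    (hbpos : ∀ n, 0 < b n)
    {s : ℝ} (hs : s ∈ Set.Icc (0:ℝ) 1) : 0 ≤ x s := by
  by_cases hmem : s ∈ cantorThirdsSet
  · rw [hxC s hmem]
  · have : s ∈ ⋃ (n : ℕ), ⋃ (k : ℕ) (_ : k < 2 ^ n), removedInterval n k := by
      by_contra hcon
      exact hmem ⟨hs, hcon⟩
    simp only [Set.mem_iUnion] at this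
    obtain ⟨n, k, hk, hsk⟩ := this
    rw [hxI n k hk s hsk]
    have := Metric.infDist_nonneg (x := s) (s := cantorThirdsSet)
    have := hbpos n
    positivity

lemma exists_gap (hxC : ∀ s ∈ cantorThirdsSet, x s = 0)
    {s : ℝ} (hs : s ∈ Set.Icc (0:ℝ) 1) (hxs : x s ≠ 0) :
    ∃ n k, k < 2^n ∧ s ∈ removedInterval n k := by
  by_cases hmem : s ∈ cantorThirdsSet
  · exact absurd (hxC s hmem) hxs
  · have : s ∈ ⋃ (n : ℕ), ⋃ (k : ℕ) (_ : k < 2 ^ n), removedInterval n k := by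
      by_contra hcon
      exact hmem ⟨hs, hcon⟩
    simp only [Set.mem_iUnion] at this
    obtain ⟨n, k, hk, hsk⟩ := this
    exact ⟨n, k, hk, hsk⟩

lemma x_left_end (hxC : ∀ s ∈ cantorThirdsSet, x s = 0) {n k : ℕ} (hk : k < 2^n) :
    x (cantorLeft n k) = 0 := hxC _ (endpoint_left_mem n k hk)

lemma x_right_end (hxC : ∀ s ∈ cantorThirdsSet, x s = 0) {n k : ℕ} (hk : k < 2^n) :
    x (cantorLeft n k + β n) = 0 := hxC _ (endpoint_right_mem n k hk)

lemma x_mid (hxI : ∀ n k : ℕ, k < 2 ^ n → ∀ s ∈ removedInterval n k,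
      x s = 2 * 3 ^ (n + 1) * b n * Metric.infDist s cantorThirdsSet)
    {n k : ℕ} (hk : k < 2^n) : x (cantorLeft n k + β n / 2) = b n := by
  have hb := beta_pos n
  have hmem : cantorLeft n k + β n / 2 ∈ removedInterval n k := by
    constructor
    · show cantorLeft n k < _; linarith
    · show _ < cantorLeft n k + (3:ℝ)^(-((n:ℤ)+1))
      have : (3:ℝ)^(-((n:ℤ)+1)) = β n := rfl
      rw [this]; linarith
  rw [x_gap hxI hk hmem]
  have hmin : min (cantorLeft n k + β n / 2 - cantorLeft n k)
      (cantorLeft n k + β n - (cantorLeft n k + β n / 2)) = β n / 2 := by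
    rw [show cantorLeft n k + β n / 2 - cantorLeft n k = β n / 2 by ring,
        show cantorLeft n k + β n - (cantorLeft n k + β n / 2) = β n / 2 by ring, min_self]
  rw [hmin]
  have hp := pow_mul_beta n
  have heq : 2 * (3:ℝ)^(n+1) * b n * (β n / 2) = (3:ℝ)^(n+1) * β n * b n := by ring
  rw [heq, hp, one_mul]

lemma x_mono_left (hxI : ∀ n k : ℕ, k < 2 ^ n → ∀ s ∈ removedInterval n k,
      x s = 2 * 3 ^ (n + 1) * b n * Metric.infDist s cantorThirdsSet)
    (hbpos : ∀ n, 0 < b n)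
    {n k : ℕ} {s s' : ℝ} (hk : k < 2^n) (hs : s ∈ removedInterval n k)
    (hs' : s' ∈ removedInterval n k) (hss : s ≤ s')
    (hmid : s' ≤ cantorLeft n k + β n / 2) : x s ≤ x s' := by
  rw [x_gap hxI hk hs, x_gap hxI hk hs']
  have h1 : min (s - cantorLeft n k) (cantorLeft n k + β n - s) = s - cantorLeft n k :=
    min_eq_left (by linarith)
  have h2 : min (s' - cantorLeft n k) (cantorLeft n k + β n - s') = s' - cantorLeft n k :=
    min_eq_left (by linarith)
  rw [h1, h2]
  have hppos : (0:ℝ) < (3:ℝ)^(n+1) := by positivity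
  have hbn := hbpos n
  have hcoef : (0:ℝ) ≤ 2 * 3^(n+1) * b n := by nlinarith
  exact mul_le_mul_of_nonneg_left (by linarith) hcoef

lemma x_anti_right (hxI : ∀ n k : ℕ, k < 2 ^ n → ∀ s ∈ removedInterval n k,
      x s = 2 * 3 ^ (n + 1) * b n * Metric.infDist s cantorThirdsSet)
    (hbpos : ∀ n, 0 < b n)
    {n k : ℕ} {s s' : ℝ} (hk : k < 2^n) (hs : s ∈ removedInterval n k)
    (hs' : s' ∈ removedInterval n k) (hss : s ≤ s')
    (hmid : cantorLeft n k + β n / 2 ≤ s) : x s' ≤ x s := by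
  rw [x_gap hxI hk hs, x_gap hxI hk hs']
  have h1 : min (s - cantorLeft n k) (cantorLeft n k + β n - s) = cantorLeft n k + β n - s :=
    min_eq_right (by linarith)
  have h2 : min (s' - cantorLeft n k) (cantorLeft n k + β n - s') = cantorLeft n k + β n - s' :=
    min_eq_right (by linarith)
  rw [h1, h2]
  have hppos : (0:ℝ) < (3:ℝ)^(n+1) := by positivity
  have hbn := hbpos n
  have hcoef : (0:ℝ) ≤ 2 * 3^(n+1) * b n := by nlinarith
  exact mul_le_mul_of_nonneg_left (by linarith) hcoef

end XVals

lemma chain_sum_le {ι : Type*} [LinearOrder ι] (T : Finset ι) (f g : ι → ℝ) (B : ℝ)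
    (h1 : ∀ i ∈ T, g i ≤ f i) (h2 : ∀ i ∈ T, ∀ j ∈ T, i < j → f i ≤ g j)
    (h3 : ∀ i ∈ T, f i ≤ B) (h4 : ∀ i ∈ T, 0 ≤ g i) :
    ∑ i ∈ T, (f i - g i) ≤ max B 0 := by
  classical
  revert h1 h2 h3 h4
  induction T using Finset.induction_on_max generalizing B with
  | empty => intros; simp [le_max_right]
  | insert a s ha ih =>
    intro h1 h2 h3 h4
    have hamem : a ∈ insert a s := Finset.mem_insert_self a s
    have hnotmem : a ∉ s := fun h => lt_irrefl a (ha a h)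
    have hsum : ∑ i ∈ s, (f i - g i) ≤ max (g a) 0 := ih (g a)
      (fun i hi => h1 i (Finset.mem_insert_of_mem hi))
      (fun i hi j hj hij => h2 i (Finset.mem_insert_of_mem hi) j (Finset.mem_insert_of_mem hj) hij)
      (fun i hi => h2 i (Finset.mem_insert_of_mem hi) a hamem (ha i hi))
      (fun i hi => h4 i (Finset.mem_insert_of_mem hi))
    rw [Finset.sum_insert hnotmem]
    have hga := h4 a hamem
    rw [max_eq_left hga] at hsum
    have hfa := h3 a hamem
    have := le_max_left B (0:ℝ)
    linarith

lemma chain_sum_le' {ι : Type*} [LinearOrder ι] (T : Finset ι) (f g : ι → ℝ) (B : ℝ)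
    (h1 : ∀ i ∈ T, g i ≤ f i) (h2 : ∀ i ∈ T, ∀ j ∈ T, i < j → f j ≤ g i)
    (h3 : ∀ i ∈ T, f i ≤ B) (h4 : ∀ i ∈ T, 0 ≤ g i) :
    ∑ i ∈ T, (f i - g i) ≤ max B 0 := by
  classical
  revert h1 h2 h3 h4
  induction T using Finset.induction_on_min generalizing B with
  | empty => intros; simp [le_max_right]
  | insert a s ha ih =>
    intro h1 h2 h3 h4
    have hamem : a ∈ insert a s := Finset.mem_insert_self a s
    have hnotmem : a ∉ s := fun h => lt_irrefl a (ha a h)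
    have hsum : ∑ i ∈ s, (f i - g i) ≤ max (g a) 0 := ih (g a)
      (fun i hi => h1 i (Finset.mem_insert_of_mem hi))
      (fun i hi j hj hij => h2 i (Finset.mem_insert_of_mem hi) j (Finset.mem_insert_of_mem hj) hij)
      (fun i hi => h2 a hamem i (Finset.mem_insert_of_mem hi) (ha i hi))
      (fun i hi => h4 i (Finset.mem_insert_of_mem hi))
    rw [Finset.sum_insert hnotmem]
    have hga := h4 a hamem
    rw [max_eq_left hga] at hsum
    have hfa := h3 a hamem
    have := le_max_left B (0:ℝ)
    linarith


open Classical in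
noncomputable def gapOf (s : ℝ) : ℕ × ℕ :=
  if h : ∃ nk : ℕ × ℕ, nk.2 < 2 ^ nk.1 ∧ s ∈ removedInterval nk.1 nk.2 then h.choose else (0, 0)

lemma gapOf_spec {s : ℝ} (h : ∃ nk : ℕ × ℕ, nk.2 < 2 ^ nk.1 ∧ s ∈ removedInterval nk.1 nk.2) :
    (gapOf s).2 < 2 ^ (gapOf s).1 ∧ s ∈ removedInterval (gapOf s).1 (gapOf s).2 := by
  unfold gapOf
  rw [dif_pos h]
  exact h.choose_spec

noncomputable def lpt (p : ℕ × ℕ) : ℝ := cantorLeft p.1 p.2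
noncomputable def mpt (p : ℕ × ℕ) : ℝ := cantorLeft p.1 p.2 + β p.1 / 2
noncomputable def rpt (p : ℕ × ℕ) : ℝ := cantorLeft p.1 p.2 + β p.1

lemma pt_mem_Icc (p : ℕ × ℕ) {y : ℝ} (hy : y = lpt p ∨ y = mpt p ∨ y = rpt p) :
    y ∈ Set.Icc (cantorLeft p.1 p.2) (cantorLeft p.1 p.2 + β p.1) := by
  have hb := beta_pos p.1
  rcases hy with rfl | rfl | rfl
  · rw [show lpt p = cantorLeft p.1 p.2 from rfl]
    exact ⟨le_refl _, by linarith⟩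
  · rw [show mpt p = cantorLeft p.1 p.2 + β p.1 / 2 from rfl]
    exact ⟨by linarith, by linarith⟩
  · rw [show rpt p = cantorLeft p.1 p.2 + β p.1 from rfl]
    exact ⟨by linarith, le_refl _⟩

end CantorTentAux

open CantorTentAux


set_option maxHeartbeats 1000000

/-- For the Cantor tent function `x²` and any `c > 0`, `t ∈ [0,1]`:
`Σₙ 2·kₙ(t)·max(bₙ − c, 0) ≤ TV^c(x²,[0,t]) ≤ Σₙ 2·(kₙ(t)+1)·max(bₙ − c, 0)`. -/
theorem truncVar_cantorTent_bounds (b : ℕ → ℝ) (hb : Antitone b)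
    (hbpos : ∀ n, 0 < b n) (hblim : Tendsto b atTop (nhds 0))
    (x : ℝ → ℝ) (hxC : ∀ s ∈ cantorThirdsSet, x s = 0)
    (hxI : ∀ n k : ℕ, k < 2 ^ n → ∀ s ∈ removedInterval n k,
      x s = 2 * 3 ^ (n + 1) * b n * Metric.infDist s cantorThirdsSet)
    (c : ℝ) (hc : 0 < c) (t : ℝ) (ht : t ∈ Set.Icc (0 : ℝ) 1) :
    (∑' n : ℕ, 2 * (levelCount n t : ℝ≥0∞) * ENNReal.ofReal (max (b n - c) 0)) ≤
        truncVar x c 0 t ∧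
      truncVar x c 0 t ≤
        ∑' n : ℕ, 2 * ((levelCount n t : ℝ≥0∞) + 1) * ENNReal.ofReal (max (b n - c) 0) := by
  classical
  obtain ⟨ht0, ht1⟩ := ht
  obtain ⟨N, hN⟩ : ∃ N, ∀ n, N ≤ n → b n < c := by
    have h : ∀ᶠ n in atTop, b n < c := hblim.eventually_lt_const hc
    obtain ⟨N, hN⟩ := eventually_atTop.mp h
    exact ⟨N, hN⟩
  have hofmax : ∀ r : ℝ, ENNReal.ofReal (max r 0) = ENNReal.ofReal r := by
    intro r
    rcases le_total r 0 with h | h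
    · rw [max_eq_right h, ENNReal.ofReal_zero, eq_comm, ENNReal.ofReal_eq_zero]
      exact h
    · rw [max_eq_left h]
  have hbc_lt : ∀ {n : ℕ}, c < b n → n < N := by
    intro n h
    by_contra hcon
    push_neg at hcon
    exact absurd (hN n hcon) (by linarith)
  have hldef : ∀ p : ℕ × ℕ, lpt p = cantorLeft p.1 p.2 := fun _ => rfl
  have hmdef : ∀ p : ℕ × ℕ, mpt p = cantorLeft p.1 p.2 + β p.1 / 2 := fun _ => rfl
  have hrdef : ∀ p : ℕ × ℕ, rpt p = cantorLeft p.1 p.2 + β p.1 := fun _ => rfl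
  have hlpos : ∀ p : ℕ × ℕ, 0 < cantorLeft p.1 p.2 := by
    intro p
    rw [cantorLeft_eq]
    have := pL_nonneg p.1 p.2
    have := beta_pos p.1
    linarith
  have hlevel : ∀ n, levelCount n t = ((Finset.range (2 ^ n)).filter
      (fun k => cantorLeft n k + (3 : ℝ) ^ (-((n : ℤ) + 1)) ≤ t)).card := fun n => rfl
  constructor
  · -- LOWER BOUND
    set S : Finset (ℕ × ℕ) := (Finset.range N).biUnion
      (fun n => ((Finset.range (2 ^ n)).filter
        (fun k => cantorLeft n k + (3 : ℝ) ^ (-((n : ℤ) + 1)) ≤ t)).image (fun k => (n, k)))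
      with hSdef
    have hmemS : ∀ p : ℕ × ℕ, p ∈ S ↔
        p.1 < N ∧ p.2 < 2 ^ p.1 ∧ cantorLeft p.1 p.2 + β p.1 ≤ t := by
      rintro ⟨n, k⟩
      rw [hSdef]
      simp only [Finset.mem_biUnion, Finset.mem_range, Finset.mem_image, Finset.mem_filter,
        Finset.mem_range]
      constructor
      · rintro ⟨n', hn', k', ⟨hk', hkt⟩, heq⟩
        injection heq with h1 h2
        subst h1; subst h2
        exact ⟨hn', hk', hkt⟩
      · rintro ⟨h1, h2, h3⟩
        exact ⟨n, h1, k, ⟨h2, h3⟩, rfl⟩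
    have hzero : ∀ n ∉ Finset.range N,
        2 * (levelCount n t : ℝ≥0∞) * ENNReal.ofReal (max (b n - c) 0) = 0 := by
      intro n hn
      have hn' : N ≤ n := le_of_not_gt (fun h => hn (Finset.mem_range.mpr h))
      rw [max_eq_right (by linarith [hN n hn']), ENNReal.ofReal_zero, mul_zero]
    rw [tsum_eq_sum hzero]
    have hsumS : ∑ n ∈ Finset.range N, 2 * (levelCount n t : ℝ≥0∞)
          * ENNReal.ofReal (max (b n - c) 0)
        = ∑ p ∈ S, 2 * ENNReal.ofReal (b p.1 - c) := by
      rw [hSdef, Finset.sum_biUnion]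
      · apply Finset.sum_congr rfl
        intro n hn
        rw [Finset.sum_image (by intro a _ a' _ hab; injection hab)]
        calc 2 * (levelCount n t : ℝ≥0∞) * ENNReal.ofReal (max (b n - c) 0)
            = ∑ _k ∈ (Finset.range (2 ^ n)).filter
                (fun k => cantorLeft n k + (3 : ℝ) ^ (-((n : ℤ) + 1)) ≤ t),
                  2 * ENNReal.ofReal (b n - c) := by
              rw [Finset.sum_const, nsmul_eq_mul, hofmax, hlevel n]
              ring
          _ = ∑ k ∈ (Finset.range (2 ^ n)).filter
                (fun k => cantorLeft n k + (3 : ℝ) ^ (-((n : ℤ) + 1)) ≤ t),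
                  2 * ENNReal.ofReal (b (n, k).1 - c) := rfl
      · intro a ha a' ha' hne
        apply Finset.disjoint_left.mpr
        rintro ⟨n1, k1⟩ hmem1 hmem2
        simp only [Finset.mem_image] at hmem1 hmem2
        obtain ⟨k2, _, hk2⟩ := hmem1
        obtain ⟨k3, _, hk3⟩ := hmem2
        injection hk2 with e1 _
        injection hk3 with e2 _
        exact hne (by rw [e1, e2])
    rw [hsumS]
    rcases S.eq_empty_or_nonempty with hSe | hSne
    · rw [hSe]
      simp
    -- construct partition
    set P : Finset ℝ := insert 0 (insert t
        (S.biUnion (fun p => {lpt p, mpt p, rpt p}))) with hPdef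
    have h0P : (0:ℝ) ∈ P := Finset.mem_insert_self _ _
    have htP : t ∈ P := Finset.mem_insert_of_mem (Finset.mem_insert_self _ _)
    have hlP : ∀ p ∈ S, lpt p ∈ P ∧ mpt p ∈ P ∧ rpt p ∈ P := by
      intro p hp
      refine ⟨?_, ?_, ?_⟩ <;>
        (apply Finset.mem_insert_of_mem; apply Finset.mem_insert_of_mem;
         exact Finset.mem_biUnion.mpr ⟨p, hp, by simp⟩)
    have hPclass : ∀ y ∈ P, y = 0 ∨ y = t ∨
        ∃ p' ∈ S, y = lpt p' ∨ y = mpt p' ∨ y = rpt p' := by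
      intro y hy
      rw [hPdef] at hy
      rcases Finset.mem_insert.mp hy with rfl | hy
      · exact Or.inl rfl
      rcases Finset.mem_insert.mp hy with rfl | hy
      · exact Or.inr (Or.inl rfl)
      obtain ⟨p', hp', hyp⟩ := Finset.mem_biUnion.mp hy
      simp only [Finset.mem_insert, Finset.mem_singleton] at hyp
      exact Or.inr (Or.inr ⟨p', hp', hyp⟩)
    have hbound : ∀ y ∈ P, 0 ≤ y ∧ y ≤ t := by
      intro y hy
      rcases hPclass y hy with rfl | rfl | ⟨p', hp'S, hyp⟩
      · exact ⟨le_refl _, ht0⟩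
      · exact ⟨ht0, le_refl _⟩
      · obtain ⟨hpN, hpk, hpt⟩ := (hmemS p').mp hp'S
        have hb' := beta_pos p'.1
        have hl := hlpos p'
        obtain ⟨hy1, hy2⟩ := pt_mem_Icc p' hyp
        exact ⟨by linarith, by linarith⟩
    obtain ⟨p0, hp0S⟩ := hSne
    have hcard2 : 1 < P.card := by
      apply Finset.one_lt_card.mpr
      refine ⟨0, h0P, rpt p0, (hlP p0 hp0S).2.2, ?_⟩
      intro h
      have := hlpos p0
      have := beta_pos p0.1
      have := hrdef p0
      linarith [h]
    have hPcard : P.card = (P.card - 1) + 1 := by omega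
    set m := P.card - 1 with hmdef2
    set iso := P.orderIsoOfFin hPcard with hisodef
    set u : Fin (m+1) → ℝ := fun i => (iso i : ℝ) with hudef
    have humono : Monotone u := fun i j hij => Subtype.coe_le_coe.mpr (iso.monotone hij)
    have hustrict : StrictMono u := fun i j hij => Subtype.coe_lt_coe.mpr (iso.strictMono hij)
    have humem : ∀ i, u i ∈ P := fun i => (iso i).2
    have huP : ∀ y, ∀ hy : y ∈ P, u (iso.symm ⟨y, hy⟩) = y := by
      intro y hy
      rw [hudef]
      exact congrArg Subtype.val (iso.apply_symm_apply ⟨y, hy⟩)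
    have hu0 : u 0 = 0 := by
      apply le_antisymm
      · have h := humono (Fin.zero_le (iso.symm ⟨0, h0P⟩))
        rwa [huP 0 h0P] at h
      · exact (hbound _ (humem 0)).1
    have hulast : u (Fin.last m) = t := by
      apply le_antisymm
      · exact (hbound _ (humem _)).2
      · have h := humono (Fin.le_last (iso.symm ⟨t, htP⟩))
        rwa [huP t htP] at h
    have hconsec : ∀ pv qv : ℝ, ∀ hp : pv ∈ P, qv ∈ P → pv < qv →
        (∀ y ∈ P, ¬(pv < y ∧ y < qv)) →
        ∃ i : Fin m, u i.castSucc = pv ∧ u i.succ = qv := by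
      intro pv qv hp hq hpq hno
      have hjlt : (iso.symm ⟨pv, hp⟩ : Fin (m+1)).val < m := by
        by_contra hcon
        push_neg at hcon
        have hj : iso.symm ⟨pv, hp⟩ = Fin.last m := by
          apply Fin.ext
          have := (iso.symm ⟨pv, hp⟩).isLt
          simp only [Fin.val_last]
          omega
        have hpt' : u (Fin.last m) = pv := by rw [← hj]; exact huP pv hp
        rw [hulast] at hpt'
        have hqt : qv ≤ t := (hbound qv hq).2
        rw [hpt'] at hqt
        linarith
      refine ⟨⟨(iso.symm ⟨pv, hp⟩).val, hjlt⟩, ?_, ?_⟩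
      · have hce : (⟨(iso.symm ⟨pv, hp⟩).val, hjlt⟩ : Fin m).castSucc = iso.symm ⟨pv, hp⟩ :=
          Fin.ext rfl
        rw [hce]
        exact huP pv hp
      · set i : Fin m := ⟨(iso.symm ⟨pv, hp⟩).val, hjlt⟩ with hidef
        have hcasteq : u i.castSucc = pv := by
          have hce : i.castSucc = iso.symm ⟨pv, hp⟩ := Fin.ext rfl
          rw [hce]
          exact huP pv hp
        have h1 : pv < u i.succ := by
          rw [← hcasteq]
          exact hustrict (Fin.castSucc_lt_succ (i := i))
        have h2 : qv ≤ u i.succ := by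
          by_contra hcon
          push_neg at hcon
          exact hno (u i.succ) (humem _) ⟨h1, hcon⟩
        have h3 : u i.succ ≤ qv := by
          have hgt : iso.symm ⟨pv, hp⟩ < iso.symm ⟨qv, hq⟩ :=
            (OrderIso.lt_iff_lt _).mpr (Subtype.mk_lt_mk.mpr hpq)
          have hsuccle : i.succ ≤ iso.symm ⟨qv, hq⟩ := by
            rw [Fin.le_def]
            rw [Fin.lt_def] at hgt
            simp only [Fin.val_succ, Fin.val_mk]
            change (iso.symm ⟨pv, hp⟩ : Fin (m+1)).val + 1 ≤ (iso.symm ⟨qv, hq⟩ : Fin (m+1)).val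
            omega
          have h := humono hsuccle
          rwa [huP qv hq] at h
        exact le_antisymm h3 h2
    have hnogap : ∀ p ∈ S, ∀ y ∈ P, y ≤ cantorLeft p.1 p.2 ∨ cantorLeft p.1 p.2 + β p.1 ≤ y ∨
        y = lpt p ∨ y = mpt p ∨ y = rpt p := by
      intro p hpS y hy
      obtain ⟨hpN, hpk, hpt⟩ := (hmemS p).mp hpS
      rcases hPclass y hy with rfl | rfl | ⟨p', hp'S, hyp⟩
      · left
        have := hlpos p
        linarith
      · right; left; exact hpt
      · rcases eq_or_ne p' p with rfl | hne
        · right; right; exact hyp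
        · obtain ⟨hp'N, hp'k, hp't⟩ := (hmemS p').mp hp'S
          have hprodne : (p'.1, p'.2) ≠ (p.1, p.2) := by
            intro h
            injection h with e1 e2
            exact hne (Prod.ext e1 e2)
          have hd := closedGap_disjoint hp'k hpk hprodne
          rw [Set.disjoint_left] at hd
          have hynot : y ∉ Set.Icc (cantorLeft p.1 p.2) (cantorLeft p.1 p.2 + β p.1) :=
            hd (pt_mem_Icc p' hyp)
          rw [Set.mem_Icc] at hynot
          push_neg at hynot
          rcases le_or_gt y (cantorLeft p.1 p.2) with h | h
          · left; exact h
          · right; left; exact (hynot h.le).le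
    have hexists : ∀ p ∈ S, ∀ side : Bool,
        ∃ i : Fin m, ENNReal.ofReal (b p.1 - c)
            ≤ ENNReal.ofReal (|x (u i.succ) - x (u i.castSucc)| - c)
          ∧ u i.castSucc = (if side then mpt p else lpt p) := by
      intro p hpS side
      obtain ⟨hpN, hpk, hpt⟩ := (hmemS p).mp hpS
      have hbp := beta_pos p.1
      obtain ⟨hlmem, hmmem, hrmem⟩ := hlP p hpS
      have hxl : x (lpt p) = 0 := x_left_end hxC hpk
      have hxm : x (mpt p) = b p.1 := x_mid hxI hpk
      have hxr : x (rpt p) = 0 := x_right_end hxC hpk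
      cases side
      · have hnb : ∀ y ∈ P, ¬(lpt p < y ∧ y < mpt p) := by
          intro y hy hcon
          obtain ⟨h1, h2⟩ := hcon
          rcases hnogap p hpS y hy with h | h | h | h | h <;>
            linarith [hldef p, hmdef p, hrdef p, hbp, h]
        obtain ⟨i, hi1, hi2⟩ := hconsec (lpt p) (mpt p) hlmem hmmem
          (by linarith [hldef p, hmdef p, hbp]) hnb
        refine ⟨i, ?_, by rw [hi1]; simp⟩
        rw [hi1, hi2, hxm, hxl, sub_zero, abs_of_pos (hbpos p.1)]
      · have hnb : ∀ y ∈ P, ¬(mpt p < y ∧ y < rpt p) := by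
          intro y hy hcon
          obtain ⟨h1, h2⟩ := hcon
          rcases hnogap p hpS y hy with h | h | h | h | h <;>
            linarith [hldef p, hmdef p, hrdef p, hbp, h]
        obtain ⟨i, hi1, hi2⟩ := hconsec (mpt p) (rpt p) hmmem hrmem
          (by linarith [hmdef p, hrdef p, hbp]) hnb
        refine ⟨i, ?_, by rw [hi1]; simp⟩
        rw [hi1, hi2, hxm, hxr, zero_sub, abs_neg, abs_of_pos (hbpos p.1)]
    have hmpos : 0 < m := by omega
    set A : Finset ((ℕ × ℕ) × Bool) := S ×ˢ Finset.univ with hAdef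
    set φ : (ℕ × ℕ) × Bool → Fin m := fun z =>
      if h : z.1 ∈ S then (hexists z.1 h z.2).choose else ⟨0, hmpos⟩ with hφdef
    have hφspec : ∀ z : (ℕ × ℕ) × Bool, ∀ h : z.1 ∈ S,
        ENNReal.ofReal (b z.1.1 - c)
            ≤ ENNReal.ofReal (|x (u (φ z).succ) - x (u (φ z).castSucc)| - c)
          ∧ u (φ z).castSucc = (if z.2 then mpt z.1 else lpt z.1) := by
      intro z h
      rw [hφdef]
      simp only [dif_pos h]
      exact (hexists z.1 h z.2).choose_spec
    have hφinj : ∀ z ∈ A, ∀ z' ∈ A, φ z = φ z' → z = z' := by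
      intro z hz z' hz' heq
      have hzS : z.1 ∈ S := (Finset.mem_product.mp hz).1
      have hz'S : z'.1 ∈ S := (Finset.mem_product.mp hz').1
      have h1 := (hφspec z hzS).2
      have h2 := (hφspec z' hz'S).2
      rw [heq, h2] at h1
      have hzk := ((hmemS z.1).mp hzS).2.1
      have hz'k := ((hmemS z'.1).mp hz'S).2.1
      rcases eq_or_ne z.1 z'.1 with hpp | hpp
      · rw [← hpp] at h1
        have hside : z.2 = z'.2 := by
          have hbb := beta_pos z.1.1
          rcases Bool.eq_false_or_eq_true z.2 with hb1 | hb1 <;>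
            rcases Bool.eq_false_or_eq_true z'.2 with hb2 | hb2
          · rw [hb1, hb2]
          · exfalso
            rw [hb1, hb2] at h1
            simp at h1
            linarith [hldef z.1, hmdef z.1, h1]
          · exfalso
            rw [hb1, hb2] at h1
            simp at h1
            linarith [hldef z.1, hmdef z.1, h1]
          · rw [hb1, hb2]
        exact Prod.ext hpp hside
      · exfalso
        have hprodne : (z'.1.1, z'.1.2) ≠ (z.1.1, z.1.2) := by
          intro h
          injection h with e1 e2
          exact hpp (Prod.ext e1 e2).symm
        have hd := closedGap_disjoint hz'k hzk hprodne
        rw [Set.disjoint_left] at hd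
        have hmem1 : (if z'.2 then mpt z'.1 else lpt z'.1) ∈
            Set.Icc (cantorLeft z'.1.1 z'.1.2) (cantorLeft z'.1.1 z'.1.2 + β z'.1.1) := by
          apply pt_mem_Icc
          rcases Bool.eq_false_or_eq_true z'.2 with hb | hb <;> rw [hb] <;> simp
        have hmem2 : (if z'.2 then mpt z'.1 else lpt z'.1) ∈
            Set.Icc (cantorLeft z.1.1 z.1.2) (cantorLeft z.1.1 z.1.2 + β z.1.1) := by
          rw [h1]
          apply pt_mem_Icc
          rcases Bool.eq_false_or_eq_true z.2 with hb | hb <;> rw [hb] <;> simp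
        exact hd hmem1 hmem2
    calc ∑ p ∈ S, 2 * ENNReal.ofReal (b p.1 - c)
        = ∑ z ∈ A, ENNReal.ofReal (b z.1.1 - c) := by
          rw [hAdef, Finset.sum_product]
          apply Finset.sum_congr rfl
          intro p _
          rw [Fintype.sum_bool, two_mul]
      _ ≤ ∑ z ∈ A, ENNReal.ofReal (|x (u (φ z).succ) - x (u (φ z).castSucc)| - c) :=
          Finset.sum_le_sum (fun z hz => (hφspec z (Finset.mem_product.mp hz).1).1)
      _ = ∑ i ∈ A.image φ, ENNReal.ofReal (|x (u i.succ) - x (u i.castSucc)| - c) := by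
          rw [Finset.sum_image hφinj]
      _ ≤ ∑ i : Fin m, ENNReal.ofReal (|x (u i.succ) - x (u i.castSucc)| - c) := by
          exact Finset.sum_le_sum_of_subset (Finset.subset_univ _)
      _ ≤ truncVar x c 0 t := by
          rw [truncVar]
          exact le_iSup_of_le m (le_iSup_of_le u (le_iSup_of_le humono
            (le_iSup_of_le hu0 (le_iSup_of_le hulast (le_refl _)))))
  · -- UPPER BOUND
    rw [truncVar]
    apply iSup_le; intro m
    apply iSup_le; intro u
    apply iSup_le; intro humono
    apply iSup_le; intro hu0
    apply iSup_le; intro hulast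
    have hut : ∀ i : Fin (m+1), 0 ≤ u i ∧ u i ≤ t := fun i =>
      ⟨hu0 ▸ humono (Fin.zero_le i), hulast ▸ humono (Fin.le_last i)⟩
    have hu01 : ∀ i : Fin (m+1), u i ∈ Set.Icc (0:ℝ) 1 := fun i =>
      ⟨(hut i).1, le_trans (hut i).2 ht1⟩
    have hxnn : ∀ i : Fin (m+1), 0 ≤ x (u i) := fun i => x_nonneg hxC hxI hbpos (hu01 i)
    set U : Finset (Fin m) := Finset.univ.filter (fun i =>
      x (u i.castSucc) < x (u i.succ) ∧ c < |x (u i.succ) - x (u i.castSucc)|) with hUdef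
    set D : Finset (Fin m) := Finset.univ.filter (fun i =>
      x (u i.succ) < x (u i.castSucc) ∧ c < |x (u i.succ) - x (u i.castSucc)|) with hDdef
    have hsplit : (∑ i : Fin m, ENNReal.ofReal (|x (u i.succ) - x (u i.castSucc)| - c))
        ≤ (∑ i ∈ U, ENNReal.ofReal (|x (u i.succ) - x (u i.castSucc)| - c))
          + ∑ i ∈ D, ENNReal.ofReal (|x (u i.succ) - x (u i.castSucc)| - c) := by
      rw [← Finset.sum_union (by
        rw [Finset.disjoint_left]
        intro i hiU hiD
        rw [hUdef, Finset.mem_filter] at hiU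
        rw [hDdef, Finset.mem_filter] at hiD
        linarith [hiU.2.1, hiD.2.1])]
      apply le_of_eq
      apply (Finset.sum_subset (Finset.subset_univ _) ?_).symm
      intro i _ hni
      rw [Finset.mem_union] at hni
      push_neg at hni
      obtain ⟨hnU, hnD⟩ := hni
      rw [hUdef, Finset.mem_filter] at hnU
      rw [hDdef, Finset.mem_filter] at hnD
      rw [ENNReal.ofReal_eq_zero]
      rcases lt_trichotomy (x (u i.castSucc)) (x (u i.succ)) with hlt | heq | hgt
      · have h1 : ¬(c < |x (u i.succ) - x (u i.castSucc)|) := by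
          intro hcc
          exact hnU ⟨Finset.mem_univ i, hlt, hcc⟩
        push_neg at h1
        linarith
      · rw [← heq, sub_self, abs_zero]
        linarith
      · have h1 : ¬(c < |x (u i.succ) - x (u i.castSucc)|) := by
          intro hcc
          exact hnD ⟨Finset.mem_univ i, hgt, hcc⟩
        push_neg at h1
        linarith
    set Gaps : Finset (ℕ × ℕ) := (Finset.range N).biUnion
      (fun n => ((Finset.range (2 ^ n)).filter (fun k => cantorLeft n k < t)).image
        (fun k => (n, k))) with hGdef
    have hmemG : ∀ p : ℕ × ℕ, p ∈ Gaps ↔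
        p.1 < N ∧ p.2 < 2 ^ p.1 ∧ cantorLeft p.1 p.2 < t := by
      rintro ⟨n, k⟩
      rw [hGdef]
      simp only [Finset.mem_biUnion, Finset.mem_range, Finset.mem_image, Finset.mem_filter,
        Finset.mem_range]
      constructor
      · rintro ⟨n', hn', k', ⟨hk', hkt⟩, heq⟩
        injection heq with h1 h2
        subst h1; subst h2
        exact ⟨hn', hk', hkt⟩
      · rintro ⟨h1, h2, h3⟩
        exact ⟨n, h1, k, ⟨h2, h3⟩, rfl⟩
    have hgapface : ∀ i : Fin (m+1), 0 < x (u i) →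
        (gapOf (u i)).2 < 2 ^ (gapOf (u i)).1 ∧
          u i ∈ removedInterval (gapOf (u i)).1 (gapOf (u i)).2 := by
      intro i hpos
      apply gapOf_spec
      obtain ⟨n', k', hk', hmem'⟩ := exists_gap hxC (hu01 i) (ne_of_gt hpos)
      exact ⟨(n', k'), hk', hmem'⟩
    have hmapsU : ∀ i ∈ U, gapOf (u i.succ) ∈ Gaps := by
      intro i hi
      rw [hUdef, Finset.mem_filter] at hi
      obtain ⟨-, hlt, habs⟩ := hi
      have habs' : c < x (u i.succ) - x (u i.castSucc) := by
        rwa [abs_of_pos (by linarith)] at habs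
      have hqc : c < x (u i.succ) := by linarith [hxnn i.castSucc]
      obtain ⟨hk, hmem⟩ := hgapface i.succ (lt_trans hc hqc)
      rw [hmemG]
      refine ⟨?_, hk, ?_⟩
      · exact hbc_lt (lt_of_lt_of_le hqc (x_le_b hxI hbpos hk hmem))
      · exact lt_of_lt_of_le hmem.1 (hut i.succ).2
    have hmapsD : ∀ i ∈ D, gapOf (u i.castSucc) ∈ Gaps := by
      intro i hi
      rw [hDdef, Finset.mem_filter] at hi
      obtain ⟨-, hlt, habs⟩ := hi
      have habs' : c < x (u i.castSucc) - x (u i.succ) := by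
        rwa [abs_of_neg (by linarith), neg_sub] at habs
      have hqc : c < x (u i.castSucc) := by linarith [hxnn i.succ]
      obtain ⟨hk, hmem⟩ := hgapface i.castSucc (lt_trans hc hqc)
      rw [hmemG]
      refine ⟨?_, hk, ?_⟩
      · exact hbc_lt (lt_of_lt_of_le hqc (x_le_b hxI hbpos hk hmem))
      · exact lt_of_lt_of_le hmem.1 (hut i.castSucc).2
    have hfibU : ∀ nk ∈ Gaps, (∑ i ∈ U.filter (fun i => gapOf (u i.succ) = nk),
        ENNReal.ofReal (|x (u i.succ) - x (u i.castSucc)| - c))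
        ≤ ENNReal.ofReal (b nk.1 - c) := by
      intro nk _
      set T := U.filter (fun i => gapOf (u i.succ) = nk) with hTdef
      have hTfact : ∀ i ∈ T, nk.2 < 2 ^ nk.1 ∧ u i.succ ∈ removedInterval nk.1 nk.2 ∧
          x (u i.castSucc) < x (u i.succ) ∧ c < x (u i.succ) - x (u i.castSucc) := by
        intro i hi
        rw [hTdef, Finset.mem_filter, hUdef, Finset.mem_filter] at hi
        obtain ⟨⟨-, hlt, habs⟩, hgap⟩ := hi
        have habs' : c < x (u i.succ) - x (u i.castSucc) := by
          rwa [abs_of_pos (by linarith)] at habs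
        have hqpos : 0 < x (u i.succ) := by linarith [hxnn i.castSucc]
        obtain ⟨hk, hmem⟩ := hgapface i.succ hqpos
        rw [hgap] at hk hmem
        exact ⟨hk, hmem, hlt, habs'⟩
      rcases T.eq_empty_or_nonempty with hTe | hTne
      · rw [hTe, Finset.sum_empty]
        exact zero_le
      have hsc : ∀ i ∈ T, ENNReal.ofReal (|x (u i.succ) - x (u i.castSucc)| - c)
          = ENNReal.ofReal (x (u i.succ) - x (u i.castSucc) - c) := by
        intro i hi
        obtain ⟨-, -, hlt, -⟩ := hTfact i hi
        rw [abs_of_pos (by linarith)]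
      rw [Finset.sum_congr rfl hsc,
        ← ENNReal.ofReal_sum_of_nonneg (fun i hi => by
          obtain ⟨-, -, -, h4⟩ := hTfact i hi; linarith)]
      apply ENNReal.ofReal_le_ofReal
      have hchain : ∑ i ∈ T, (x (u i.succ) - x (u i.castSucc)) ≤ max (b nk.1) 0 := by
        apply chain_sum_le T (fun i => x (u i.succ)) (fun i => x (u i.castSucc))
        · intro i hi; exact (hTfact i hi).2.2.1.le
        · intro i hi j hj hij
          obtain ⟨hk, hqi, -, -⟩ := hTfact i hi
          obtain ⟨-, hqj, hltj, -⟩ := hTfact j hj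
          have hle1 : u i.succ ≤ u j.castSucc := humono (by
            rw [Fin.le_def]
            rw [Fin.lt_def] at hij
            simp only [Fin.val_succ, Fin.coe_castSucc]
            omega)
          have hle2 : u j.castSucc ≤ u j.succ := humono (Fin.castSucc_lt_succ (i := j)).le
          have hpj : u j.castSucc ∈ removedInterval nk.1 nk.2 :=
            ⟨lt_of_lt_of_le hqi.1 hle1, lt_of_le_of_lt hle2 hqj.2⟩
          have hmid : u j.castSucc ≤ cantorLeft nk.1 nk.2 + β nk.1 / 2 := by
            by_contra hcon
            push_neg at hcon
            have := x_anti_right hxI hbpos hk hpj hqj hle2 hcon.le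
            linarith
          exact x_mono_left hxI hbpos hk hqi hpj hle1 hmid
        · intro i hi; exact x_le_b hxI hbpos (hTfact i hi).1 (hTfact i hi).2.1
        · intro i hi; exact hxnn i.castSucc
      have hcardc : c ≤ (T.card : ℝ) * c := by
        have h1 : (1:ℝ) ≤ T.card := by
          have := Finset.card_pos.mpr hTne
          exact_mod_cast this
        nlinarith
      calc ∑ i ∈ T, (x (u i.succ) - x (u i.castSucc) - c)
          = (∑ i ∈ T, (x (u i.succ) - x (u i.castSucc))) - T.card * c := by
            rw [Finset.sum_sub_distrib, Finset.sum_const, nsmul_eq_mul]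
        _ ≤ max (b nk.1) 0 - c := by linarith
        _ = b nk.1 - c := by rw [max_eq_left (hbpos nk.1).le]
    have hfibD : ∀ nk ∈ Gaps, (∑ i ∈ D.filter (fun i => gapOf (u i.castSucc) = nk),
        ENNReal.ofReal (|x (u i.succ) - x (u i.castSucc)| - c))
        ≤ ENNReal.ofReal (b nk.1 - c) := by
      intro nk _
      set T := D.filter (fun i => gapOf (u i.castSucc) = nk) with hTdef
      have hTfact : ∀ i ∈ T, nk.2 < 2 ^ nk.1 ∧ u i.castSucc ∈ removedInterval nk.1 nk.2 ∧
          x (u i.succ) < x (u i.castSucc) ∧ c < x (u i.castSucc) - x (u i.succ) := by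
        intro i hi
        rw [hTdef, Finset.mem_filter, hDdef, Finset.mem_filter] at hi
        obtain ⟨⟨-, hlt, habs⟩, hgap⟩ := hi
        have habs' : c < x (u i.castSucc) - x (u i.succ) := by
          rwa [abs_of_neg (by linarith), neg_sub] at habs
        have hppos : 0 < x (u i.castSucc) := by linarith [hxnn i.succ]
        obtain ⟨hk, hmem⟩ := hgapface i.castSucc hppos
        rw [hgap] at hk hmem
        exact ⟨hk, hmem, hlt, habs'⟩
      rcases T.eq_empty_or_nonempty with hTe | hTne
      · rw [hTe, Finset.sum_empty]
        exact zero_le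
      have hsc : ∀ i ∈ T, ENNReal.ofReal (|x (u i.succ) - x (u i.castSucc)| - c)
          = ENNReal.ofReal (x (u i.castSucc) - x (u i.succ) - c) := by
        intro i hi
        obtain ⟨-, -, hlt, -⟩ := hTfact i hi
        rw [abs_of_neg (by linarith), neg_sub]
      rw [Finset.sum_congr rfl hsc,
        ← ENNReal.ofReal_sum_of_nonneg (fun i hi => by
          obtain ⟨-, -, -, h4⟩ := hTfact i hi; linarith)]
      apply ENNReal.ofReal_le_ofReal
      have hchain : ∑ i ∈ T, (x (u i.castSucc) - x (u i.succ)) ≤ max (b nk.1) 0 := by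
        apply chain_sum_le' T (fun i => x (u i.castSucc)) (fun i => x (u i.succ))
        · intro i hi; exact (hTfact i hi).2.2.1.le
        · intro i hi j hj hij
          obtain ⟨hk, hpi, hlti, -⟩ := hTfact i hi
          obtain ⟨-, hpj, -, -⟩ := hTfact j hj
          have hle1 : u i.succ ≤ u j.castSucc := humono (by
            rw [Fin.le_def]
            rw [Fin.lt_def] at hij
            simp only [Fin.val_succ, Fin.coe_castSucc]
            omega)
          have hle0 : u i.castSucc ≤ u i.succ := humono (Fin.castSucc_lt_succ (i := i)).le
          have hqi : u i.succ ∈ removedInterval nk.1 nk.2 :=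
            ⟨lt_of_lt_of_le hpi.1 hle0, lt_of_le_of_lt hle1 hpj.2⟩
          have hmid : cantorLeft nk.1 nk.2 + β nk.1 / 2 ≤ u i.succ := by
            by_contra hcon
            push_neg at hcon
            have := x_mono_left hxI hbpos hk hpi hqi hle0 hcon.le
            linarith
          exact x_anti_right hxI hbpos hk hqi hpj hle1 hmid
        · intro i hi; exact x_le_b hxI hbpos (hTfact i hi).1 (hTfact i hi).2.1
        · intro i hi; exact hxnn i.succ
      have hcardc : c ≤ (T.card : ℝ) * c := by
        have h1 : (1:ℝ) ≤ T.card := by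
          have := Finset.card_pos.mpr hTne
          exact_mod_cast this
        nlinarith
      calc ∑ i ∈ T, (x (u i.castSucc) - x (u i.succ) - c)
          = (∑ i ∈ T, (x (u i.castSucc) - x (u i.succ))) - T.card * c := by
            rw [Finset.sum_sub_distrib, Finset.sum_const, nsmul_eq_mul]
        _ ≤ max (b nk.1) 0 - c := by linarith
        _ = b nk.1 - c := by rw [max_eq_left (hbpos nk.1).le]
    have hUle : (∑ i ∈ U, ENNReal.ofReal (|x (u i.succ) - x (u i.castSucc)| - c))
        ≤ ∑ nk ∈ Gaps, ENNReal.ofReal (b nk.1 - c) := by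
      rw [← Finset.sum_fiberwise_of_maps_to hmapsU]
      exact Finset.sum_le_sum hfibU
    have hDle : (∑ i ∈ D, ENNReal.ofReal (|x (u i.succ) - x (u i.castSucc)| - c))
        ≤ ∑ nk ∈ Gaps, ENNReal.ofReal (b nk.1 - c) := by
      rw [← Finset.sum_fiberwise_of_maps_to hmapsD]
      exact Finset.sum_le_sum hfibD
    have hcardG : ∀ n : ℕ, (((Finset.range (2 ^ n)).filter
          (fun k => cantorLeft n k < t)).card : ℝ≥0∞)
        ≤ (levelCount n t : ℝ≥0∞) + 1 := by
      intro n
      have hnat : ((Finset.range (2 ^ n)).filter (fun k => cantorLeft n k < t)).card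
          ≤ levelCount n t + 1 := by
        set A' := (Finset.range (2 ^ n)).filter (fun k => cantorLeft n k < t) with hA'
        set B' := (Finset.range (2 ^ n)).filter
          (fun k => cantorLeft n k + (3 : ℝ) ^ (-((n : ℤ) + 1)) ≤ t) with hB'
        have hsub : A' ⊆ (A' \ B') ∪ B' := by
          intro k hk
          rw [Finset.mem_union, Finset.mem_sdiff]
          by_cases h : k ∈ B'
          · exact Or.inr h
          · exact Or.inl ⟨hk, h⟩
        have hone : (A' \ B').card ≤ 1 := by
          rw [Finset.card_le_one]
          intro k hk k' hk'
          rw [Finset.mem_sdiff, hA', hB', Finset.mem_filter, Finset.mem_filter,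
            Finset.mem_range] at hk hk'
          obtain ⟨⟨hk1, hk2⟩, hk3⟩ := hk
          obtain ⟨⟨hk1', hk2'⟩, hk3'⟩ := hk'
          have ht1' : t < cantorLeft n k + (3 : ℝ) ^ (-((n : ℤ) + 1)) := by
            by_contra hcc
            push_neg at hcc
            exact hk3 ⟨hk1, hcc⟩
          have ht2' : t < cantorLeft n k' + (3 : ℝ) ^ (-((n : ℤ) + 1)) := by
            by_contra hcc
            push_neg at hcc
            exact hk3' ⟨hk1', hcc⟩
          by_contra hkk
          have hprodne : (n, k) ≠ (n, k') := by
            intro h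
            injection h with _ e2
            exact hkk e2
          have hd := closedGap_disjoint hk1 hk1' hprodne
          rw [Set.disjoint_left] at hd
          exact hd ⟨hk2.le, ht1'.le⟩ ⟨hk2'.le, ht2'.le⟩
        calc A'.card ≤ ((A' \ B') ∪ B').card := Finset.card_le_card hsub
          _ ≤ (A' \ B').card + B'.card := Finset.card_union_le _ _
          _ ≤ 1 + B'.card := by omega
          _ = levelCount n t + 1 := by rw [hlevel n, hB']; omega
      calc (((Finset.range (2 ^ n)).filter (fun k => cantorLeft n k < t)).card : ℝ≥0∞)
          ≤ ((levelCount n t + 1 : ℕ) : ℝ≥0∞) := Nat.cast_le.mpr hnat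
        _ = (levelCount n t : ℝ≥0∞) + 1 := by push_cast; ring
    calc (∑ i : Fin m, ENNReal.ofReal (|x (u i.succ) - x (u i.castSucc)| - c))
        ≤ (∑ i ∈ U, ENNReal.ofReal (|x (u i.succ) - x (u i.castSucc)| - c))
          + ∑ i ∈ D, ENNReal.ofReal (|x (u i.succ) - x (u i.castSucc)| - c) := hsplit
      _ ≤ (∑ nk ∈ Gaps, ENNReal.ofReal (b nk.1 - c))
          + ∑ nk ∈ Gaps, ENNReal.ofReal (b nk.1 - c) := add_le_add hUle hDle
      _ = ∑ nk ∈ Gaps, 2 * ENNReal.ofReal (b nk.1 - c) := by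
          rw [← Finset.sum_add_distrib]
          exact Finset.sum_congr rfl (fun nk _ => (two_mul _).symm)
      _ = ∑ n ∈ Finset.range N, (((Finset.range (2 ^ n)).filter
            (fun k => cantorLeft n k < t)).card : ℝ≥0∞) * (2 * ENNReal.ofReal (b n - c)) := by
          rw [hGdef, Finset.sum_biUnion (by
            intro a ha a' ha' hne
            apply Finset.disjoint_left.mpr
            rintro ⟨n1, k1⟩ hmem1 hmem2
            simp only [Finset.mem_image] at hmem1 hmem2
            obtain ⟨k2, _, hk2⟩ := hmem1
            obtain ⟨k3, _, hk3⟩ := hmem2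
            injection hk2 with e1 _
            injection hk3 with e2 _
            exact hne (by rw [e1, e2]))]
          apply Finset.sum_congr rfl
          intro n hn
          rw [Finset.sum_image (by intro a _ a' _ hab; injection hab)]
          calc (∑ k ∈ (Finset.range (2 ^ n)).filter (fun k => cantorLeft n k < t),
                  2 * ENNReal.ofReal (b (n, k).1 - c))
              = ∑ _k ∈ (Finset.range (2 ^ n)).filter (fun k => cantorLeft n k < t),
                  2 * ENNReal.ofReal (b n - c) := rfl
            _ = (((Finset.range (2 ^ n)).filter (fun k => cantorLeft n k < t)).card : ℝ≥0∞)
                  * (2 * ENNReal.ofReal (b n - c)) := by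
                rw [Finset.sum_const, nsmul_eq_mul]
      _ ≤ ∑ n ∈ Finset.range N, ((levelCount n t : ℝ≥0∞) + 1) * (2 * ENNReal.ofReal (b n - c)) :=
          Finset.sum_le_sum (fun n _ => mul_le_mul_left (hcardG n) _)
      _ = ∑ n ∈ Finset.range N, 2 * ((levelCount n t : ℝ≥0∞) + 1)
            * ENNReal.ofReal (max (b n - c) 0) := by
          refine Finset.sum_congr rfl (fun n _ => ?_)
          rw [hofmax]
          ring
      _ ≤ ∑' n : ℕ, 2 * ((levelCount n t : ℝ≥0∞) + 1) * ENNReal.ofReal (max (b n - c) 0) :=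
          ENNReal.sum_le_tsum _
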